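/- Fix m > 0, natural numbers p_b and scalars q_b ∈ F for 0 < b ≤ m such that p_b = 0 implies q_b = 0. Then the linear operator T on the non-unital polynomial algebra F₀[x] defined on the monomial basis by T(x^{ma+b}) = q_b · x^{m(a+p_b)} for all a ≥ 0 and 0 < b ≤ m is an averaging operator, i.e. T(f)T(g) = T(T(f)g) = T(fT(g)) for all f, g ∈ F₀[x]. -/
import Mathlib


open Polynomial

/-- The monomial operator `T(x^{ma+b}) = q_b x^{m(a+p_b)}`
(for `0 < b ≤ m`, with `p_b = 0 → q_b = 0`) is an averaging operator on the
augmentation ideal `F₀[x]` of polynomials with zero constant term. -/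
theorem stmt12 {F : Type*} [Field F] (m : ℕ) (hm : 0 < m)
    (p : ℕ → ℕ) (q : ℕ → F)
    (hpq : ∀ b : ℕ, 0 < b → b ≤ m → p b = 0 → q b = 0)
    (T : Polynomial F →ₗ[F] Polynomial F)
    (hT : ∀ (a b : ℕ), 0 < b → b ≤ m →
      T (X ^ (m * a + b)) = q b • X ^ (m * (a + p b))) :
    ∀ f g : Polynomial F, f.coeff 0 = 0 → g.coeff 0 = 0 →
      T f * T g = T (T f * g) ∧ T f * T g = T (f * T g) := by
  have decomp : ∀ n : ℕ, 0 < n → ∃ a b, 0 < b ∧ b ≤ m ∧ n = m * a + b := by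
    intro n hn
    have h1 := Nat.div_add_mod (n - 1) m
    have h2 := Nat.mod_lt (n - 1) hm
    exact ⟨(n - 1) / m, (n - 1) % m + 1, by omega, by omega, by omega⟩
  have key : ∀ n1 n2 : ℕ, 0 < n1 → 0 < n2 →
      T (X ^ n1 : Polynomial F) * T (X ^ n2) = T (T (X ^ n1) * X ^ n2) ∧
      T (X ^ n1 : Polynomial F) * T (X ^ n2) = T (X ^ n1 * T (X ^ n2)) := by
    intro n1 n2 h1 h2
    obtain ⟨a1, b1, hb1, hb1m, rfl⟩ := decomp n1 h1
    obtain ⟨a2, b2, hb2, hb2m, rfl⟩ := decomp n2 h2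
    rw [hT a1 b1 hb1 hb1m, hT a2 b2 hb2 hb2m]
    constructor
    · simp only [smul_mul_assoc, mul_smul_comm, map_smul, smul_smul, ← pow_add]
      rw [show m * (a1 + p b1) + (m * a2 + b2) = m * (a1 + p b1 + a2) + b2 from by ring,
        hT _ b2 hb2 hb2m, smul_smul,
        show m * (a1 + p b1) + m * (a2 + p b2) = m * (a1 + p b1 + a2 + p b2) from by ring]
      ring_nf
    · simp only [smul_mul_assoc, mul_smul_comm, map_smul, smul_smul, ← pow_add]
      rw [show m * a1 + b1 + m * (a2 + p b2) = m * (a1 + (a2 + p b2)) + b1 from by ring,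
        hT _ b1 hb1 hb1m, smul_smul, mul_comm (q b2),
        show m * (a1 + p b1) + m * (a2 + p b2) = m * (a1 + (a2 + p b2) + p b1) from by ring]
  intro f g hf hg
  have pos1 : ∀ n ∈ f.support, 0 < n := by
    intro n hn
    rcases Nat.eq_zero_or_pos n with h | h
    · exact absurd (h ▸ hf) (mem_support_iff.mp hn)
    · exact h
  have pos2 : ∀ n ∈ g.support, 0 < n := by
    intro n hn
    rcases Nat.eq_zero_or_pos n with h | h
    · exact absurd (h ▸ hg) (mem_support_iff.mp hn)
    · exact h
  constructor
  · conv_lhs => rw [f.as_sum_support, g.as_sum_support]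
    conv_rhs => rw [f.as_sum_support, g.as_sum_support]
    simp only [← smul_X_eq_monomial, map_sum, map_smul, Finset.sum_mul,
      Finset.mul_sum, smul_mul_assoc, mul_smul_comm]
    refine Finset.sum_congr rfl fun n2 hn2 => ?_
    congr 1
    refine Finset.sum_congr rfl fun n1 hn1 => ?_
    congr 1
    exact (key n1 n2 (pos1 n1 hn1) (pos2 n2 hn2)).1
  · conv_lhs => rw [f.as_sum_support, g.as_sum_support]
    conv_rhs => rw [f.as_sum_support, g.as_sum_support]
    simp only [← smul_X_eq_monomial, map_sum, map_smul, Finset.sum_mul,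
      Finset.mul_sum, smul_mul_assoc, mul_smul_comm]
    refine Finset.sum_congr rfl fun n2 hn2 => ?_
    congr 1
    refine Finset.sum_congr rfl fun n1 hn1 => ?_
    congr 1
    exact (key n1 n2 (pos1 n1 hn1) (pos2 n2 hn2)).2
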